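/- For a permutation σ with saillance composition I = (i₁,...,i_r), the values at positions 1, i₁+1, i₁+i₂+1, ..., i₁+⋯+i_{r-1}+1 are not recoils of σ, hence the number of recoils of σ is at most n − r. -/

import Mathlib

open scoped Classical

/-- A word is *initially dominated* if its first letter is strictly greater
than all subsequent letters. -/
def initiallyDominated (w : List ℕ) : Prop :=
  w ≠ [] ∧ ∀ a ∈ w.tail, a < w.head!

/-- Positions (0-indexed) of the left-to-right maxima of a word. -/
def lrMaxPositions (w : List ℕ) : List ℕ :=
  (List.range w.length).filter (fun i => decide (∀ j < i, w[j]! < w[i]!))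

/-- The saillance composition of a word: gaps between consecutive
left-to-right maxima positions. -/
def SC (w : List ℕ) : List ℕ :=
  List.zipWith (fun a b => a - b) ((lrMaxPositions w).tail ++ [w.length]) (lrMaxPositions w)

/-- The word (one-line notation, values in {1,…,n}) of a permutation of {1,…,n}. -/
def permWord {n : ℕ} (σ : Equiv.Perm (Fin n)) : List ℕ :=
  List.ofFn (fun i => (σ i : ℕ) + 1)

/-- The set of recoils of a permutation: values `v ∈ {1,…,n−1}` such that
`v+1` appears to the left of `v` in the word of `σ`. -/
def recoilSet {n : ℕ} (σ : Equiv.Perm (Fin n)) : Finset ℕ :=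
  (Finset.Icc 1 (n - 1)).filter
    (fun v => (permWord σ).idxOf (v + 1) < (permWord σ).idxOf v)

-- auxiliary lemmas
lemma mem_lrMax {w : List ℕ} {i : ℕ} :
    i ∈ lrMaxPositions w ↔ i < w.length ∧ ∀ j < i, w[j]! < w[i]! := by
  simp [lrMaxPositions]

lemma lrMax_pairwise (w : List ℕ) : (lrMaxPositions w).Pairwise (· < ·) :=
  List.Pairwise.sublist List.filter_sublist List.pairwise_lt_range

lemma lrMax_lt_len {w : List ℕ} {i : ℕ} (hi : i ∈ lrMaxPositions w) : i < w.length :=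
  (mem_lrMax.1 hi).1

lemma lrMax_get_lt {w : List ℕ} {i j : ℕ} (hi : i < (lrMaxPositions w).length)
    (hj : j < (lrMaxPositions w).length) (hij : i < j) :
    (lrMaxPositions w)[i] < (lrMaxPositions w)[j] := by
  have := List.pairwise_iff_get.1 (lrMax_pairwise w) ⟨i, hi⟩ ⟨j, hj⟩ hij
  simpa using this

lemma lrMax_get_zero {w : List ℕ} (h : 0 < (lrMaxPositions w).length) :
    (lrMaxPositions w)[0] = 0 := by
  have hw : 0 < w.length := lrMax_lt_len (List.getElem_mem h) |>.trans_le' (Nat.zero_le _)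
  have h0 : (0 : ℕ) ∈ lrMaxPositions w := mem_lrMax.2 ⟨hw, by omega⟩
  obtain ⟨i, hi, hie⟩ := List.mem_iff_getElem.1 h0
  rcases Nat.eq_zero_or_pos i with rfl | hpos
  · exact hie
  · have := lrMax_get_lt h hi hpos
    omega

lemma SC_length (w : List ℕ) : (SC w).length = (lrMaxPositions w).length := by
  unfold SC
  rcases lrMaxPositions w with _ | ⟨a, l⟩ <;> simp

lemma SC_sum_take (w : List ℕ) :
    ∀ k (hk : k < (lrMaxPositions w).length),
      ((SC w).take k).sum = (lrMaxPositions w)[k] := by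
  intro k
  induction k with
  | zero => intro hk; simpa using (lrMax_get_zero hk).symm
  | succ k ih =>
    intro hk
    have hk' : k < (lrMaxPositions w).length := by omega
    have hkSC : k < (SC w).length := by rw [SC_length]; omega
    rw [List.sum_take_succ _ _ hkSC, ih hk']
    have htail : k < (lrMaxPositions w).tail.length := by
      rcases hLc : lrMaxPositions w with _ | ⟨a, l⟩
      · rw [hLc] at hk; simp at hk
      · rw [hLc] at hk; simpa using Nat.lt_of_succ_lt_succ hk
    have hlen2 : k < ((lrMaxPositions w).tail ++ [w.length]).length := by
      simp; omega
    have hget : (SC w)[k]'hkSC =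
        ((lrMaxPositions w).tail ++ [w.length])[k]'hlen2 - (lrMaxPositions w)[k]'hk' := by
      simp only [SC, List.getElem_zipWith]
    have h1 : ((lrMaxPositions w).tail ++ [w.length])[k]'hlen2 = (lrMaxPositions w)[k+1]'hk := by
      rw [List.getElem_append_left htail, List.getElem_tail]
    have h2 : (lrMaxPositions w)[k]'hk' < (lrMaxPositions w)[k+1]'hk :=
      lrMax_get_lt hk' hk (Nat.lt_succ_self k)
    rw [hget, h1]
    omega

lemma permWord_nodup {n : ℕ} (σ : Equiv.Perm (Fin n)) : (permWord σ).Nodup := by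
  refine List.nodup_ofFn.2 ?_
  intro a b hab
  simp only [add_left_inj, Nat.cast_injective.eq_iff] at hab
  exact σ.injective (Fin.ext (by omega))

lemma permWord_length {n : ℕ} (σ : Equiv.Perm (Fin n)) : (permWord σ).length = n := by
  simp [permWord]

lemma permWord_mem_Icc {n : ℕ} (σ : Equiv.Perm (Fin n)) {a : ℕ} (ha : a ∈ permWord σ) :
    a ∈ Finset.Icc 1 n := by
  rw [permWord, List.mem_ofFn] at ha
  obtain ⟨i, rfl⟩ := ha
  have := (σ i).isLt
  simp only [Finset.mem_Icc]
  omega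

/-- For `σ` with saillance composition `I = (i₁,…,i_r)`, the values at
positions `1, i₁+1, …, i₁+⋯+i_{r-1}+1` are not recoils; hence `σ` has at
most `n − r` recoils. -/
theorem stmt8 (n : ℕ) (I : List ℕ) (σ : Equiv.Perm (Fin n))
    (h : SC (permWord σ) = I) :
    (∀ k < I.length, (permWord σ)[(I.take k).sum]! ∉ recoilSet σ) ∧
      (recoilSet σ).card ≤ n - I.length := by
  subst h
  set w := permWord σ with hw
  have hlen : w.length = n := permWord_length σ
  have hnd : w.Nodup := permWord_nodup σ
  have hIL : (SC w).length = (lrMaxPositions w).length := SC_length w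
  have key : ∀ k < (SC w).length, w[((SC w).take k).sum]! ∉ recoilSet σ := by
    intro k hk
    have hkL : k < (lrMaxPositions w).length := by omega
    have hsum : ((SC w).take k).sum = (lrMaxPositions w)[k] := SC_sum_take w k hkL
    set p := (lrMaxPositions w)[k] with hp
    have hpmem : p ∈ lrMaxPositions w := List.getElem_mem hkL
    have hplt : p < w.length := lrMax_lt_len hpmem
    have hmax : ∀ j < p, w[j]! < w[p]! := (mem_lrMax.1 hpmem).2
    have hget : w[((SC w).take k).sum]! = w[p] := by
      rw [hsum, getElem!_pos w _ hplt]
    rw [hget]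
    intro hrec
    rw [recoilSet, Finset.mem_filter] at hrec
    obtain ⟨hIcc, hlt⟩ := hrec
    have hidx : w.idxOf w[p] = p := hnd.idxOf_getElem p hplt
    rw [← hw] at hlt
    rw [hidx] at hlt
    set q := w.idxOf (w[p] + 1) with hq
    have hqlt : q < w.length := lt_trans hlt hplt
    have hmem : w[p] + 1 ∈ w := List.idxOf_lt_length_iff.1 hqlt
    have hgetq : w[q] = w[p] + 1 := List.getElem_idxOf hqlt
    have := hmax q hlt
    rw [getElem!_pos w _ hqlt,
      getElem!_pos w _ hplt, hgetq] at this
    omega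
  refine ⟨key, ?_⟩
  -- cardinality bound
  set r := (SC w).length with hr
  set S : Finset ℕ := (Finset.range r).image (fun k => w[((SC w).take k).sum]!) with hS
  have hScard : S.card = r := by
    rw [hS, Finset.card_image_of_injOn, Finset.card_range]
    intro a ha b hb hab
    simp only [Finset.coe_range, Set.mem_Iio] at ha hb
    dsimp only at hab
    have haL : a < (lrMaxPositions w).length := by omega
    have hbL : b < (lrMaxPositions w).length := by omega
    rw [SC_sum_take w a haL, SC_sum_take w b hbL] at hab
    have haw : (lrMaxPositions w)[a] < w.length := lrMax_lt_len (List.getElem_mem haL)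
    have hbw : (lrMaxPositions w)[b] < w.length := lrMax_lt_len (List.getElem_mem hbL)
    rw [getElem!_pos w _ haw,
      getElem!_pos w _ hbw] at hab
    have := (hnd.getElem_inj_iff).1 hab
    rcases lt_trichotomy a b with hab' | hab' | hab'
    · exact absurd (lrMax_get_lt haL hbL hab') (by omega)
    · exact hab'
    · exact absurd (lrMax_get_lt hbL haL hab') (by omega)
  have hSsub : S ⊆ Finset.Icc 1 n := by
    intro x hx
    rw [hS, Finset.mem_image] at hx
    obtain ⟨k, hk, rfl⟩ := hx
    simp only [Finset.mem_range] at hk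
    have hkL : k < (lrMaxPositions w).length := by omega
    have hplt : (lrMaxPositions w)[k] < w.length := lrMax_lt_len (List.getElem_mem hkL)
    rw [SC_sum_take w k hkL, getElem!_pos w _ hplt]
    exact permWord_mem_Icc σ (List.getElem_mem hplt)
  have hsub : recoilSet σ ⊆ Finset.Icc 1 n \ S := by
    intro v hv
    rw [Finset.mem_sdiff]
    constructor
    · have := (Finset.mem_filter.1 hv).1
      rw [Finset.mem_Icc] at this ⊢
      omega
    · intro hvS
      rw [hS, Finset.mem_image] at hvS
      obtain ⟨k, hk, hkv⟩ := hvS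
      simp only [Finset.mem_range] at hk
      exact key k hk (hkv ▸ hv)
  calc (recoilSet σ).card ≤ (Finset.Icc 1 n \ S).card := Finset.card_le_card hsub
    _ = n - r := by rw [Finset.card_sdiff_of_subset hSsub, Nat.card_Icc, hScard]; omega
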